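/- Let Γ be a natural number with 1 ≤ Γ ≤ n and let x, y ∈ {0,1}^n. Then sup_{c∈U^Γ} min( Σ_{i=1}^n c_i x_i , Σ_{i=1}^n c_i y_i ) = min_{α∈[0,1]} g(x,y,α). That is, for k = 2 the worst-case cost of the pair (x,y) over the budgeted uncertainty set equals the minimum over α ∈ [0,1] of g(x,y,α). -/

import Mathlib

/-- The budgeted uncertainty set `U^Γ`. -/
def budgetSet (n : ℕ) (chat d : Fin n → ℝ) (Γ : ℝ) : Set (Fin n → ℝ) :=
  {c | ∃ z : Fin n → ℝ, (∀ i, 0 ≤ z i ∧ z i ≤ 1) ∧ (∑ i, z i) ≤ Γ ∧ ∀ i, c i = chat i + d i * z i}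

/-- `‖v‖^(Γ)`: the maximum over subsets `S` of cardinality `Γ` of `Σ_{i∈S} v i`. -/
noncomputable def gammaNorm (n : ℕ) (Γ : ℕ) (v : Fin n → ℝ) : ℝ :=
  sSup {s : ℝ | ∃ S : Finset (Fin n), S.card = Γ ∧ s = ∑ i ∈ S, v i}

/-- The function `g(x,y,α)` from the k = 2 reformulation. -/
noncomputable def g (n : ℕ) (Γn : ℕ) (chat d : Fin n → ℝ) (x y : Fin n → ℝ) (α : ℝ) : ℝ :=
  α * ∑ i, chat i * x i + (1 - α) * ∑ i, chat i * y i +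
    gammaNorm n Γn (fun i => d i * (α * x i + (1 - α) * y i))


lemma gammaNorm_spec (n Γ : ℕ) (hΓn : Γ ≤ n) (v : Fin n → ℝ) :
    (∃ S : Finset (Fin n), S.card = Γ ∧ gammaNorm n Γ v = ∑ i ∈ S, v i) ∧
    (∀ S : Finset (Fin n), S.card = Γ → ∑ i ∈ S, v i ≤ gammaNorm n Γ v) := by
  set T := {s : ℝ | ∃ S : Finset (Fin n), S.card = Γ ∧ s = ∑ i ∈ S, v i} with hT
  have hsub : T ⊆ ↑((Finset.powersetCard Γ (Finset.univ : Finset (Fin n))).image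
      fun S => ∑ i ∈ S, v i) := by
    rintro s ⟨S, hS, rfl⟩
    simp only [Finset.coe_image, Set.mem_image, Finset.mem_coe, Finset.mem_powersetCard]
    exact ⟨S, ⟨S.subset_univ, hS⟩, rfl⟩
  have hTfin : T.Finite := Set.Finite.subset (Finset.finite_toSet _) hsub
  have hTne : T.Nonempty := by
    obtain ⟨S, _, hS⟩ := Finset.exists_subset_card_eq (s := (Finset.univ : Finset (Fin n))) (n := Γ) (by simpa using hΓn)
    exact ⟨_, S, hS, rfl⟩
  constructor
  · exact hTne.csSup_mem hTfin
  · intro S hS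
    exact le_csSup hTfin.bddAbove ⟨S, hS, rfl⟩

lemma lp_bound (n Γ : ℕ) (hΓ1 : 1 ≤ Γ) (hΓn : Γ ≤ n) (w : Fin n → ℝ) (hw : ∀ i, 0 ≤ w i)
    (z : Fin n → ℝ) (hz : ∀ i, 0 ≤ z i ∧ z i ≤ 1) (hzΓ : ∑ i, z i ≤ (Γ : ℝ)) :
    ∑ i, w i * z i ≤ gammaNorm n Γ w := by
  -- a maximizing set S₀
  have hpne : (Finset.powersetCard Γ (Finset.univ : Finset (Fin n))).Nonempty :=
    Finset.powersetCard_nonempty.2 (by simpa using hΓn)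
  obtain ⟨S₀, hS₀mem, hS₀max⟩ :=
    Finset.exists_max_image (Finset.powersetCard Γ (Finset.univ : Finset (Fin n)))
      (fun S => ∑ i ∈ S, w i) hpne
  have hS₀card : S₀.card = Γ := (Finset.mem_powersetCard.1 hS₀mem).2
  have hgn : ∑ i ∈ S₀, w i ≤ gammaNorm n Γ w := (gammaNorm_spec n Γ hΓn w).2 S₀ hS₀card
  have hS₀ne : S₀.Nonempty := Finset.card_pos.1 (by omega)
  obtain ⟨j, hjS₀, hjmin⟩ := Finset.exists_min_image S₀ w hS₀ne
  -- elements outside S₀ are at most w j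
  have hout : ∀ i ∉ S₀, w i ≤ w j := by
    intro i hi
    have hins : (insert i (S₀.erase j)) ∈ Finset.powersetCard Γ (Finset.univ : Finset (Fin n)) := by
      rw [Finset.mem_powersetCard]
      refine ⟨Finset.subset_univ _, ?_⟩
      rw [Finset.card_insert_of_notMem (fun h => hi (Finset.mem_of_mem_erase h)),
        Finset.card_erase_of_mem hjS₀, hS₀card]
      omega
    have := hS₀max _ hins
    rw [Finset.sum_insert (fun h => hi (Finset.mem_of_mem_erase h)),
      ← Finset.sum_erase_add S₀ w hjS₀] at this
    linarith
  have key : ∑ i, w i * z i ≤ ∑ i ∈ S₀, w i := by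
    have hsplit : ∑ i ∈ S₀, w i * z i + ∑ i ∈ S₀ᶜ, w i * z i = ∑ i, w i * z i :=
      Finset.sum_add_sum_compl S₀ _
    have h1 : ∑ i ∈ S₀ᶜ, w i * z i ≤ w j * ∑ i ∈ S₀ᶜ, z i := by
      rw [Finset.mul_sum]
      refine Finset.sum_le_sum fun i hi => ?_
      exact mul_le_mul_of_nonneg_right (hout i (by simpa using hi)) (hz i).1
    have h2 : ∑ i ∈ S₀ᶜ, z i ≤ ∑ i ∈ S₀, (1 - z i) := by
      have hs : ∑ i ∈ S₀, z i + ∑ i ∈ S₀ᶜ, z i = ∑ i, z i := Finset.sum_add_sum_compl S₀ _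
      have he : ∑ i ∈ S₀, (1 - z i) = (Γ : ℝ) - ∑ i ∈ S₀, z i := by
        rw [Finset.sum_sub_distrib, Finset.sum_const, hS₀card, nsmul_eq_mul, mul_one]
      linarith
    have h3 : w j * ∑ i ∈ S₀ᶜ, z i ≤ w j * ∑ i ∈ S₀, (1 - z i) :=
      mul_le_mul_of_nonneg_left h2 (hw j)
    have h4 : ∑ i ∈ S₀, w i * z i + w j * ∑ i ∈ S₀, (1 - z i) ≤ ∑ i ∈ S₀, w i := by
      rw [Finset.mul_sum, ← Finset.sum_add_distrib]
      refine Finset.sum_le_sum fun i hi => ?_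
      have := hjmin i hi
      have := (hz i).1
      have := (hz i).2
      nlinarith
    linarith
  linarith

lemma gammaNorm_eq_sup' (n Γ : ℕ) (hΓn : Γ ≤ n)
    (h𝒮 : (Finset.powersetCard Γ (Finset.univ : Finset (Fin n))).Nonempty) (v : Fin n → ℝ) :
    gammaNorm n Γ v
      = (Finset.powersetCard Γ (Finset.univ : Finset (Fin n))).sup' h𝒮 fun S => ∑ i ∈ S, v i := by
  obtain ⟨⟨S₀, hS₀, hval⟩, hub⟩ := gammaNorm_spec n Γ hΓn v
  apply le_antisymm
  · rw [hval]
    exact Finset.le_sup' (fun S => ∑ i ∈ S, v i) (Finset.mem_powersetCard.2 ⟨Finset.subset_univ _, hS₀⟩)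
  · exact Finset.sup'_le _ _ fun S hS => hub S (Finset.mem_powersetCard.1 hS).2

lemma gammaNorm_cont (n Γ : ℕ) (hΓn : Γ ≤ n) (d x y : Fin n → ℝ) :
    Continuous fun α : ℝ => gammaNorm n Γ (fun i => d i * (α * x i + (1 - α) * y i)) := by
  have h𝒮 : (Finset.powersetCard Γ (Finset.univ : Finset (Fin n))).Nonempty :=
    Finset.powersetCard_nonempty.2 (by simpa using hΓn)
  have : (fun α : ℝ => gammaNorm n Γ (fun i => d i * (α * x i + (1 - α) * y i)))
      = fun α => (Finset.powersetCard Γ (Finset.univ : Finset (Fin n))).sup' h𝒮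
          fun S => ∑ i ∈ S, d i * (α * x i + (1 - α) * y i) := by
    funext α
    exact gammaNorm_eq_sup' n Γ hΓn h𝒮 _
  rw [this, continuous_iff_continuousAt]
  intro α
  exact ContinuousAt.finset_sup'_apply
    (f := fun S a => ∑ i ∈ S, d i * (a * x i + (1 - a) * y i)) h𝒮
    (fun S _ => Continuous.continuousAt (by continuity))

set_option maxHeartbeats 1600000 in
/-- for `k = 2` the worst-case cost of the pair `(x,y)` over the budgeted
uncertainty set equals the minimum over `α ∈ [0,1]` of `g(x,y,α)`. -/
theorem stmt6 (n : ℕ) (hn : 1 ≤ n) (chat d : Fin n → ℝ) (hd : ∀ i, 0 ≤ d i)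
    (Γ : ℕ) (hΓ1 : 1 ≤ Γ) (hΓn : Γ ≤ n)
    (x y : Fin n → ℝ) (hx : ∀ i, x i = 0 ∨ x i = 1) (hy : ∀ i, y i = 0 ∨ y i = 1) :
    sSup ((fun c => min (∑ i, c i * x i) (∑ i, c i * y i)) '' budgetSet n chat d (Γ : ℝ))
      = sInf ((fun α => g n Γ chat d x y α) '' Set.Icc (0 : ℝ) 1) := by
  have hx01 : ∀ i, 0 ≤ x i ∧ x i ≤ 1 := fun i => by rcases hx i with h | h <;> simp [h]
  have hy01 : ∀ i, 0 ≤ y i ∧ y i ≤ 1 := fun i => by rcases hy i with h | h <;> simp [h]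
  set A := ∑ i, chat i * x i with hA
  set B := ∑ i, chat i * y i with hB
  set Q : (Fin n → ℝ) → ℝ := fun z => A + ∑ i, d i * x i * z i with hQ
  set P : (Fin n → ℝ) → ℝ := fun z => B + ∑ i, d i * y i * z i with hP
  set f : ℝ → (Fin n → ℝ) → ℝ := fun α z => P z + α * (Q z - P z) with hf
  set Zf : (Fin n → ℝ) → Prop :=
    fun z => (∀ i, 0 ≤ z i ∧ z i ≤ 1) ∧ ∑ i, z i ≤ (Γ : ℝ) with hZf
  set G : ℝ → ℝ := fun α => g n Γ chat d x y α with hGdef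
  set S1 := (fun c => min (∑ i, c i * x i) (∑ i, c i * y i)) '' budgetSet n chat d (Γ : ℝ)
    with hS1
  set S2 := (fun α => g n Γ chat d x y α) '' Set.Icc (0 : ℝ) 1 with hS2
  -- basic identity for f
  have hsum : ∀ (α : ℝ) (z : Fin n → ℝ),
      ∑ i, d i * (α * x i + (1 - α) * y i) * z i
        = α * (∑ i, d i * x i * z i) + (1 - α) * (∑ i, d i * y i * z i) := by
    intro α z
    rw [Finset.mul_sum, Finset.mul_sum, ← Finset.sum_add_distrib]
    exact Finset.sum_congr rfl fun i _ => by ring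
  have hfz : ∀ (α : ℝ) (z : Fin n → ℝ),
      f α z = α * A + (1 - α) * B + ∑ i, d i * (α * x i + (1 - α) * y i) * z i := by
    intro α z
    simp only [hf, hQ, hP]
    rw [hsum]
    ring
  have hGval : ∀ α : ℝ,
      G α = α * A + (1 - α) * B + gammaNorm n Γ (fun i => d i * (α * x i + (1 - α) * y i)) :=
    fun α => rfl
  -- nonnegativity of the weight vector for α ∈ [0,1]
  have hwnn : ∀ α : ℝ, 0 ≤ α → α ≤ 1 → ∀ i, 0 ≤ d i * (α * x i + (1 - α) * y i) := by
    intro α h0 h1 i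
    have h2 : 0 ≤ α * x i := mul_nonneg h0 (hx01 i).1
    have h3 : 0 ≤ (1 - α) * y i := mul_nonneg (by linarith) (hy01 i).1
    exact mul_nonneg (hd i) (by linarith)
  -- upper bound: f α z ≤ G α for feasible z and α ∈ [0,1]
  have hub : ∀ α : ℝ, 0 ≤ α → α ≤ 1 → ∀ z, Zf z → f α z ≤ G α := by
    intro α h0 h1 z hz
    rw [hfz, hGval]
    have := lp_bound n Γ hΓ1 hΓn _ (hwnn α h0 h1) z hz.1 hz.2
    linarith
  -- attainment: for every α there is a feasible maximizer
  have hmaxat : ∀ α : ℝ, ∃ z, Zf z ∧ f α z = G α := by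
    intro α
    obtain ⟨⟨S₀, hS₀card, hS₀val⟩, -⟩ :=
      gammaNorm_spec n Γ hΓn (fun i => d i * (α * x i + (1 - α) * y i))
    refine ⟨fun i => if i ∈ S₀ then 1 else 0, ⟨fun i => by dsimp only; split <;> norm_num, ?_⟩, ?_⟩
    · rw [Finset.sum_ite_mem, Finset.univ_inter, Finset.sum_const, hS₀card, nsmul_eq_mul,
        mul_one]
    · rw [hfz, hGval, hS₀val]
      congr 1
      simp only [mul_ite, mul_one, mul_zero, Finset.sum_ite_mem, Finset.univ_inter]
  -- slope bound
  set C := |A - B| + ∑ i, d i with hC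
  have hCnn : 0 ≤ C := by
    have : 0 ≤ ∑ i, d i := Finset.sum_nonneg fun i _ => hd i
    have := abs_nonneg (A - B)
    rw [hC]; linarith
  have hslope : ∀ z, Zf z → |Q z - P z| ≤ C := by
    intro z hz
    have h1 : Q z - P z = (A - B) + ∑ i, d i * (x i - y i) * z i := by
      simp only [hQ, hP]
      have hd2 : ∑ i, d i * (x i - y i) * z i
          = ∑ i, d i * x i * z i - ∑ i, d i * y i * z i := by
        rw [← Finset.sum_sub_distrib]
        exact Finset.sum_congr rfl fun i _ => by ring
      rw [hd2]; ring
    rw [h1, hC]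
    calc |A - B + ∑ i, d i * (x i - y i) * z i|
        ≤ |A - B| + |∑ i, d i * (x i - y i) * z i| := abs_add_le _ _
      _ ≤ |A - B| + ∑ i, |d i * (x i - y i) * z i| :=
          add_le_add_right (Finset.abs_sum_le_sum_abs _ _) _
      _ ≤ |A - B| + ∑ i, d i := by
          refine add_le_add_right (Finset.sum_le_sum fun i _ => ?_) _
          have hxy : |x i - y i| ≤ 1 := by
            rcases hx i with h | h <;> rcases hy i with h' | h' <;> rw [h, h'] <;> norm_num
          have hzi : |z i| ≤ 1 := abs_le.2 ⟨by linarith [(hz.1 i).1], (hz.1 i).2⟩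
          rw [abs_mul, abs_mul, abs_of_nonneg (hd i)]
          nlinarith [mul_nonneg (hd i) (sub_nonneg.2 hxy),
            mul_nonneg (mul_nonneg (hd i) (abs_nonneg (x i - y i))) (sub_nonneg.2 hzi)]
  -- min is below every convex combination
  have hminle : ∀ α : ℝ, 0 ≤ α → α ≤ 1 → ∀ z, min (Q z) (P z) ≤ f α z := by
    intro α h0 h1 z
    simp only [hf]
    rcases le_total (Q z) (P z) with h | h
    · rw [min_eq_left h]; nlinarith
    · rw [min_eq_right h]; nlinarith
  -- membership in S1
  have hS1mem : ∀ z, Zf z → min (Q z) (P z) ∈ S1 := by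
    intro z hz
    refine ⟨fun i => chat i + d i * z i, ⟨z, hz.1, hz.2, fun i => rfl⟩, ?_⟩
    have e1 : ∑ i, (chat i + d i * z i) * x i = Q z := by
      simp only [hQ, hA]
      rw [← Finset.sum_add_distrib]
      exact Finset.sum_congr rfl fun i _ => by ring
    have e2 : ∑ i, (chat i + d i * z i) * y i = P z := by
      simp only [hP, hB]
      rw [← Finset.sum_add_distrib]
      exact Finset.sum_congr rfl fun i _ => by ring
    simp only [e1, e2]
  have hS1elem : ∀ r ∈ S1, ∃ z, Zf z ∧ r = min (Q z) (P z) := by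
    rintro r ⟨c, ⟨z, hz1, hz2, hc⟩, rfl⟩
    refine ⟨z, ⟨hz1, hz2⟩, ?_⟩
    have e1 : ∑ i, c i * x i = Q z := by
      simp only [hQ, hA]
      rw [← Finset.sum_add_distrib]
      exact Finset.sum_congr rfl fun i _ => by rw [hc i]; ring
    have e2 : ∑ i, c i * y i = P z := by
      simp only [hP, hB]
      rw [← Finset.sum_add_distrib]
      exact Finset.sum_congr rfl fun i _ => by rw [hc i]; ring
    simp only [e1, e2]
  -- the zero vector is feasible
  have hz0 : Zf (fun _ => 0) := by
    refine ⟨fun i => by norm_num, ?_⟩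
    simp only [Finset.sum_const_zero]
    positivity
  have hS1ne : S1.Nonempty := ⟨_, hS1mem _ hz0⟩
  have hS2ne : S2.Nonempty := ⟨G 0, 0, by norm_num, rfl⟩
  have hS1bdd : BddAbove S1 := by
    refine ⟨G 0, fun r hr => ?_⟩
    obtain ⟨z, hz, rfl⟩ := hS1elem r hr
    exact le_trans (hminle 0 le_rfl zero_le_one z) (hub 0 le_rfl zero_le_one z hz)
  have hS2bdd : BddBelow S2 := by
    refine ⟨min (Q fun _ => 0) (P fun _ => 0), ?_⟩
    rintro t ⟨α, hα, rfl⟩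
    exact le_trans (hminle α hα.1 hα.2 _) (hub α hα.1 hα.2 _ hz0)
  -- easy direction
  have heasy : sSup S1 ≤ sInf S2 := by
    apply csSup_le hS1ne
    intro r hr
    apply le_csInf hS2ne
    rintro t ⟨α, hα, rfl⟩
    obtain ⟨z, hz, rfl⟩ := hS1elem r hr
    exact le_trans (hminle α hα.1 hα.2 z) (hub α hα.1 hα.2 z hz)
  -- continuity of G and a minimizer over [0,1]
  have hGcont : Continuous G := by
    have hGeq : G = fun α => α * A + (1 - α) * B
        + gammaNorm n Γ (fun i => d i * (α * x i + (1 - α) * y i)) := by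
      funext α
      rw [hGval]
    rw [hGeq]
    exact Continuous.add (by fun_prop) (gammaNorm_cont n Γ hΓn d x y)
  obtain ⟨αs, hαsmem, hαsmin'⟩ := isCompact_Icc.exists_isMinOn
    (Set.nonempty_Icc.2 (zero_le_one' ℝ)) hGcont.continuousOn
  have hαsmin : ∀ β ∈ Set.Icc (0:ℝ) 1, G αs ≤ G β := fun β hβ => hαsmin' hβ
  -- hard direction
  have hhard : sInf S2 ≤ sSup S1 := by
    have h1 : sInf S2 ≤ G αs := csInf_le hS2bdd ⟨αs, hαsmem, rfl⟩
    refine le_trans h1 ?_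
    by_contra hcon
    push_neg at hcon
    set ε := (G αs - sSup S1) / 2 with hε
    have hεpos : 0 < ε := by rw [hε]; linarith
    have key : ∃ z, Zf z ∧ G αs - ε ≤ min (Q z) (P z) := by
      set δ := min (ε / (C + 1)) (1 / 2) with hδ
      have hC1 : (0:ℝ) < C + 1 := by linarith only [hCnn]
      have hδpos : 0 < δ := lt_min (div_pos hεpos hC1) (by norm_num)
      have hδhalf : δ ≤ 1 / 2 := min_le_right _ _
      have hδC : δ * C ≤ ε := by
        have h1 : δ ≤ ε / (C + 1) := min_le_left _ _
        have h2 : δ * (C + 1) ≤ (ε / (C + 1)) * (C + 1) :=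
          mul_le_mul_of_nonneg_right h1 (le_of_lt hC1)
        rw [div_mul_cancel₀ _ (ne_of_gt hC1)] at h2
        nlinarith only [h2, hδpos]
      have hαs0 : 0 ≤ αs := hαsmem.1
      have hαs1 : αs ≤ 1 := hαsmem.2
      rcases eq_or_lt_of_le hαs0 with h0 | h0
      · -- case αs = 0
        have hα0 : αs = 0 := h0.symm
        obtain ⟨z, hzf, hzval⟩ := hmaxat δ
        have hGb : G αs ≤ G δ := hαsmin δ ⟨le_of_lt hδpos, by linarith only [hδhalf]⟩
        have hf0 : f 0 z ≤ G 0 := hub 0 le_rfl zero_le_one z hzf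
        have hf0' : f 0 z ≤ G αs := by rw [hα0]; exact hf0
        have hdiff : f δ z - f 0 z = δ * (Q z - P z) := by simp only [hf]; ring
        have hsz : 0 ≤ Q z - P z := by
          have hh : 0 ≤ δ * (Q z - P z) := by
            rw [← hdiff, hzval]; linarith only [hGb, hf0']
          nlinarith only [hh, hδpos]
        have hsC : Q z - P z ≤ C := le_trans (le_abs_self _) (hslope z hzf)
        refine ⟨z, hzf, ?_⟩
        rw [min_eq_right (by linarith only [hsz] : P z ≤ Q z)]
        have hPz : P z = f δ z - δ * (Q z - P z) := by simp only [hf]; ring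
        have hmul : δ * (Q z - P z) ≤ δ * C := mul_le_mul_of_nonneg_left hsC (le_of_lt hδpos)
        rw [hzval] at hPz
        linarith only [hPz, hGb, hmul, hδC]
      rcases eq_or_lt_of_le hαs1 with h1 | h1
      · -- case αs = 1
        obtain ⟨z, hzf, hzval⟩ := hmaxat (1 - δ)
        have hGa : G αs ≤ G (1 - δ) :=
          hαsmin (1 - δ) ⟨by linarith only [hδhalf], by linarith only [hδpos]⟩
        have hf1 : f 1 z ≤ G 1 := hub 1 zero_le_one le_rfl z hzf
        have hf1' : f 1 z ≤ G αs := by rw [h1]; exact hf1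
        have hdiff : f 1 z - f (1 - δ) z = δ * (Q z - P z) := by simp only [hf]; ring
        have hsz : Q z - P z ≤ 0 := by
          have hh : δ * (Q z - P z) ≤ 0 := by
            rw [← hdiff, hzval]; linarith only [hGa, hf1']
          nlinarith only [hh, hδpos]
        have hsC : -C ≤ Q z - P z := neg_le_of_abs_le (hslope z hzf)
        refine ⟨z, hzf, ?_⟩
        rw [min_eq_left (by linarith only [hsz] : Q z ≤ P z)]
        have hQz : Q z = f (1 - δ) z + δ * (Q z - P z) := by simp only [hf]; ring
        have hmul : -(δ * C) ≤ δ * (Q z - P z) := by nlinarith only [hsC, hδpos]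
        rw [hzval] at hQz
        linarith only [hQz, hGa, hmul, hδC]
      · -- case 0 < αs < 1
        set δ' := min δ (min αs (1 - αs)) with hδ'
        have hδ'pos : 0 < δ' := lt_min hδpos (lt_min h0 (by linarith only [h1]))
        have hδ'δ : δ' ≤ δ := min_le_left _ _
        have hδ'a : δ' ≤ αs := le_trans (min_le_right _ _) (min_le_left _ _)
        have hδ'b : δ' ≤ 1 - αs := le_trans (min_le_right _ _) (min_le_right _ _)
        obtain ⟨z1, hz1f, hz1v⟩ := hmaxat (αs - δ')
        obtain ⟨z2, hz2f, hz2v⟩ := hmaxat (αs + δ')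
        have hGa : G αs ≤ G (αs - δ') :=
          hαsmin _ ⟨by linarith only [hδ'a], by linarith only [hδ'pos, hαs1]⟩
        have hGb : G αs ≤ G (αs + δ') :=
          hαsmin _ ⟨by linarith only [hδ'pos, hαs0], by linarith only [hδ'b]⟩
        have hfu : f αs z1 ≤ G αs := hub αs hαs0 hαs1 z1 hz1f
        have hfv : f αs z2 ≤ G αs := hub αs hαs0 hαs1 z2 hz2f
        have hd1 : f αs z1 - f (αs - δ') z1 = δ' * (Q z1 - P z1) := by simp only [hf]; ring
        have hd2 : f (αs + δ') z2 - f αs z2 = δ' * (Q z2 - P z2) := by simp only [hf]; ring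
        have hs1 : Q z1 - P z1 ≤ 0 := by
          have hh : δ' * (Q z1 - P z1) ≤ 0 := by
            rw [← hd1, hz1v]; linarith only [hGa, hfu]
          nlinarith only [hh, hδ'pos]
        have hs2 : 0 ≤ Q z2 - P z2 := by
          have hh : 0 ≤ δ' * (Q z2 - P z2) := by
            rw [← hd2, hz2v]; linarith only [hGb, hfv]
          nlinarith only [hh, hδ'pos]
        have hm1 : -C ≤ Q z1 - P z1 := neg_le_of_abs_le (hslope z1 hz1f)
        have hm2 : Q z2 - P z2 ≤ C := le_trans (le_abs_self _) (hslope z2 hz2f)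
        have e1 : f αs z1 = G (αs - δ') + δ' * (Q z1 - P z1) := by
          rw [← hz1v]; simp only [hf]; ring
        have e2 : f αs z2 = G (αs + δ') - δ' * (Q z2 - P z2) := by
          rw [← hz2v]; simp only [hf]; ring
        have hflb1 : G αs - δ * C ≤ f αs z1 := by
          have hmm : -(δ * C) ≤ δ' * (Q z1 - P z1) := by
            nlinarith only [hm1, hδ'pos, hδ'δ, hCnn]
          linarith only [e1, hGa, hmm]
        have hflb2 : G αs - δ * C ≤ f αs z2 := by
          have hmm : δ' * (Q z2 - P z2) ≤ δ * C := by
            nlinarith only [hm2, hδ'pos, hδ'δ, hCnn]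
          linarith only [e2, hGb, hmm]
        have hge : 0 ≤ (Q z2 - P z2) - (Q z1 - P z1) := by linarith only [hs1, hs2]
        rcases eq_or_lt_of_le hge with heq | hlt
        · -- both slopes vanish; use z2
          have hs20 : Q z2 - P z2 = 0 := by linarith only [heq, hs1, hs2]
          refine ⟨z2, hz2f, ?_⟩
          rw [show Q z2 = P z2 by linarith only [hs20], min_self]
          have hPf : f αs z2 = P z2 := by simp only [hf]; rw [hs20]; ring
          linarith only [hPf, hflb2, hδC]
        · -- strictly positive denominator: convex combination
          set lam := (Q z2 - P z2) / ((Q z2 - P z2) - (Q z1 - P z1)) with hlam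
          have hden : (0:ℝ) < (Q z2 - P z2) - (Q z1 - P z1) := hlt
          have hne : (Q z2 - P z2) - (Q z1 - P z1) ≠ 0 := ne_of_gt hden
          have hlam0 : 0 ≤ lam := div_nonneg hs2 (le_of_lt hden)
          have hlam1 : lam ≤ 1 := by
            rw [hlam, div_le_one hden]; linarith only [hs1]
          set zw := fun i => lam * z1 i + (1 - lam) * z2 i with hzw
          have hzwf : Zf zw := by
            constructor
            · intro i
              have ha1 := hz1f.1 i
              have ha2 := hz2f.1 i
              constructor
              · have hb1 := mul_nonneg hlam0 ha1.1
                have hb2 := mul_nonneg (by linarith only [hlam1] : (0:ℝ) ≤ 1 - lam) ha2.1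
                simp only [hzw]; linarith only [hb1, hb2]
              · have hb1 := mul_le_mul_of_nonneg_left ha1.2 hlam0
                have hb2 := mul_le_mul_of_nonneg_left ha2.2
                  (by linarith only [hlam1] : (0:ℝ) ≤ 1 - lam)
                simp only [hzw]; linarith only [hb1, hb2]
            · have hsumw : ∑ i, zw i = lam * ∑ i, z1 i + (1 - lam) * ∑ i, z2 i := by
                simp only [hzw]
                rw [Finset.sum_add_distrib, ← Finset.mul_sum, ← Finset.mul_sum]
              rw [hsumw]
              have hb1 := mul_le_mul_of_nonneg_left hz1f.2 hlam0
              have hb2 := mul_le_mul_of_nonneg_left hz2f.2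
                (by linarith only [hlam1] : (0:ℝ) ≤ 1 - lam)
              linarith only [hb1, hb2]
          have hQw : Q zw = lam * Q z1 + (1 - lam) * Q z2 := by
            simp only [hQ, hzw]
            have hh : ∑ i, d i * x i * (lam * z1 i + (1 - lam) * z2 i)
                = lam * ∑ i, d i * x i * z1 i + (1 - lam) * ∑ i, d i * x i * z2 i := by
              rw [Finset.mul_sum, Finset.mul_sum, ← Finset.sum_add_distrib]
              exact Finset.sum_congr rfl fun i _ => by ring
            rw [hh]; ring
          have hPw : P zw = lam * P z1 + (1 - lam) * P z2 := by
            simp only [hP, hzw]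
            have hh : ∑ i, d i * y i * (lam * z1 i + (1 - lam) * z2 i)
                = lam * ∑ i, d i * y i * z1 i + (1 - lam) * ∑ i, d i * y i * z2 i := by
              rw [Finset.mul_sum, Finset.mul_sum, ← Finset.sum_add_distrib]
              exact Finset.sum_congr rfl fun i _ => by ring
            rw [hh]; ring
          have hsw : Q zw - P zw = 0 := by
            rw [hQw, hPw, hlam]
            field_simp
            ring
          have hfw : f αs zw = lam * f αs z1 + (1 - lam) * f αs z2 := by
            simp only [hf]; rw [hQw, hPw]; ring
          refine ⟨zw, hzwf, ?_⟩
          rw [show Q zw = P zw by linarith only [hsw], min_self]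
          have hPf : f αs zw = P zw := by simp only [hf]; rw [hsw]; ring
          have hb1 := mul_le_mul_of_nonneg_left hflb1 hlam0
          have hb2 := mul_le_mul_of_nonneg_left hflb2
            (by linarith only [hlam1] : (0:ℝ) ≤ 1 - lam)
          linarith only [hPf, hfw, hb1, hb2, hδC]
    obtain ⟨z, hz, hle⟩ := key
    have := le_csSup hS1bdd (hS1mem z hz)
    rw [hε] at hle
    linarith
  linarith [heasy, hhard]
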